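/- arXiv:math/0607060 — 3 statements merged into one kernel-verified Lean document; each statement's English description precedes it below -/
import Mathlib

section
/- Let P be a root pairing (RootPairing ι R M N) over a commutative ring R with ι finite, and define the discriminant D : N → R by D(x) = ∏_{i ∈ ι} ⟨αᵢ, x⟩, where ⟨αᵢ, x⟩ denotes the pairing of the root αᵢ = P.root i with x ∈ N. Then D is invariant under the Weyl group: for every index j and every x ∈ N, D applied to the coreflection in the j-th root of x equals D(x). -/
open Finset

/-- The discriminant `D(x) = ∏ᵢ ⟨αᵢ, x⟩` of a root pairing is invariant under every
coreflection, hence under the Weyl group. -/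
theorem discriminant_weyl_invariant {ι R M N : Type*} [CommRing R]
    [AddCommGroup M] [Module R M] [AddCommGroup N] [Module R N] [Fintype ι]
    (P : RootPairing ι R M N) (j : ι) (x : N) :
    (∏ i : ι, P.toLinearMap (P.root i) (P.coreflection j x)) =
      ∏ i : ι, P.toLinearMap (P.root i) x := by
  have key : ∀ i : ι, P.toLinearMap (P.root i) (P.coreflection j x) =
      P.toLinearMap (P.root (P.reflectionPerm j i)) x := by
    intro i
    rw [P.root_reflectionPerm, P.reflection_apply, P.coreflection_apply]
    simp only [RootPairing.root', RootPairing.coroot', LinearMap.flip_apply, map_sub, map_smul, smul_eq_mul,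
      LinearMap.sub_apply, LinearMap.smul_apply]
    ring
  simp only [key]
  exact Fintype.prod_equiv (P.reflectionPerm j) _ _ fun i => rfl
end

section
/- Let P be a root pairing (RootPairing ι K M N) over a field K with ι finite, and let φ ∈ N satisfy ⟨αᵢ, φ⟩ ≠ 0 for every root αᵢ. Then the discriminant ratio ∑_{i ∈ ι} ⟨αᵢ, β⟩ / ⟨αᵢ, φ⟩ is invariant under the simultaneous Weyl-group action: for every index j and every β ∈ N, replacing both β and φ by their images under the coreflection in the j-th root leaves the sum unchanged. -/
open Finset

/-- The discriminant ratio `∑ᵢ ⟨αᵢ, β⟩/⟨αᵢ, φ⟩` of a root pairing over a field is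
invariant under the simultaneous action of a coreflection on `β` and `φ`. -/
theorem discriminant_ratio_weyl_invariant {ι K M N : Type*} [Field K]
    [AddCommGroup M] [Module K M] [AddCommGroup N] [Module K N] [Fintype ι]
    (P : RootPairing ι K M N) (φ : N)
    (hφ : ∀ i : ι, P.toLinearMap (P.root i) φ ≠ 0) (j : ι) (β : N) :
    (∑ i : ι, P.toLinearMap (P.root i) (P.coreflection j β) /
        P.toLinearMap (P.root i) (P.coreflection j φ)) =
      ∑ i : ι, P.toLinearMap (P.root i) β / P.toLinearMap (P.root i) φ := by
  have key : ∀ (i : ι) (x : N), P.toLinearMap (P.root i) (P.coreflection j x) =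
      P.toLinearMap (P.root (P.reflectionPerm j i)) x := by
    intro i x
    rw [P.root_reflectionPerm]
    simp [RootPairing.coreflection_apply, RootPairing.reflection_apply, map_sub, map_smul,
      mul_comm]
  calc (∑ i : ι, P.toLinearMap (P.root i) (P.coreflection j β) /
        P.toLinearMap (P.root i) (P.coreflection j φ))
      = ∑ i : ι, P.toLinearMap (P.root (P.reflectionPerm j i)) β /
          P.toLinearMap (P.root (P.reflectionPerm j i)) φ := by
        simp only [key]
    _ = ∑ i : ι, P.toLinearMap (P.root i) β / P.toLinearMap (P.root i) φ :=
        Fintype.sum_equiv (P.reflectionPerm j) _ _ (fun i => rfl)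
end

section
/- Let P be a root pairing (RootPairing ι K M N) over a field K with ι finite, and let φ ∈ N satisfy ⟨αᵢ, φ⟩ ≠ 0 for every root αᵢ. Define c : N × N × N → K by c(β, γ, δ) = ∑_{i ∈ ι} ⟨αᵢ, β⟩·⟨αᵢ, γ⟩·⟨αᵢ, δ⟩ / ⟨αᵢ, φ⟩. Then c is symmetric in its three arguments and linear in each, and c is invariant under the simultaneous Weyl-group action: for every index j, applying the coreflection in the j-th root simultaneously to β, γ, δ, and φ leaves the value of c unchanged. -/
open Finset

lemma cubic_key {ι K M N : Type*} [Field K]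
    [AddCommGroup M] [Module K M] [AddCommGroup N] [Module K N]
    (P : RootPairing ι K M N) (j i : ι) (x : N) :
    P.toLinearMap (P.root i) (P.coreflection j x)
      = P.toLinearMap (P.root (P.reflectionPerm j i)) x := by
  rw [P.root_reflectionPerm, RootPairing.reflection_apply, RootPairing.coreflection_apply]
  simp only [map_sub, map_smul, smul_eq_mul, LinearMap.sub_apply, LinearMap.smul_apply,
    RootPairing.root', RootPairing.coroot', LinearMap.flip_apply, LinearMap.sub_apply, LinearMap.smul_apply]
  ring

/-- The integrand of the symmetric formula for the Donagi–Markman cubic of the Hitchin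
system, `c(β,γ,δ) = ∑ᵢ ⟨αᵢ,β⟩⟨αᵢ,γ⟩⟨αᵢ,δ⟩ / ⟨αᵢ,φ⟩`, is symmetric in its three
arguments, linear in each, and invariant under the simultaneous Weyl-group action on
`β`, `γ`, `δ` and `φ`. -/
theorem cubic_integrand_symm_linear_weyl_invariant {ι K M N : Type*} [Field K]
    [AddCommGroup M] [Module K M] [AddCommGroup N] [Module K N] [Fintype ι]
    (P : RootPairing ι K M N) (φ : N)
    (hφ : ∀ i : ι, P.toLinearMap (P.root i) φ ≠ 0) :
    (fun c : N → N → N → N → K =>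
      (∀ β γ δ : N, c φ β γ δ = c φ γ β δ) ∧
      (∀ β γ δ : N, c φ β γ δ = c φ β δ γ) ∧
      (∀ (a : K) (β β' γ δ : N),
        c φ (a • β + β') γ δ = a * c φ β γ δ + c φ β' γ δ) ∧
      (∀ (a : K) (β γ γ' δ : N),
        c φ β (a • γ + γ') δ = a * c φ β γ δ + c φ β γ' δ) ∧
      (∀ (a : K) (β γ δ δ' : N),
        c φ β γ (a • δ + δ') = a * c φ β γ δ + c φ β γ δ') ∧
      (∀ (j : ι) (β γ δ : N),
        c (P.coreflection j φ) (P.coreflection j β) (P.coreflection j γ)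
            (P.coreflection j δ) = c φ β γ δ))
      (fun ψ β γ δ : N =>
        ∑ i : ι,
          P.toLinearMap (P.root i) β * P.toLinearMap (P.root i) γ *
              P.toLinearMap (P.root i) δ / P.toLinearMap (P.root i) ψ) := by
  refine ⟨?_, ?_, ?_, ?_, ?_, ?_⟩
  · intro β γ δ; exact Finset.sum_congr rfl fun i _ => by ring
  · intro β γ δ; exact Finset.sum_congr rfl fun i _ => by ring
  · intro a β β' γ δ
    rw [Finset.mul_sum, ← Finset.sum_add_distrib]
    refine Finset.sum_congr rfl fun i _ => ?_
    simp only [map_add, map_smul, smul_eq_mul]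
    ring
  · intro a β γ γ' δ
    rw [Finset.mul_sum, ← Finset.sum_add_distrib]
    refine Finset.sum_congr rfl fun i _ => ?_
    simp only [map_add, map_smul, smul_eq_mul]
    ring
  · intro a β γ δ δ'
    rw [Finset.mul_sum, ← Finset.sum_add_distrib]
    refine Finset.sum_congr rfl fun i _ => ?_
    simp only [map_add, map_smul, smul_eq_mul]
    ring
  · intro j β γ δ
    simp only [cubic_key]
    exact Equiv.sum_comp (P.reflectionPerm j) fun i =>
      P.toLinearMap (P.root i) β * P.toLinearMap (P.root i) γ *
        P.toLinearMap (P.root i) δ / P.toLinearMap (P.root i) φ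
end
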